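/- There is an absolute constant C > 0 such that for all positive integers n ≤ d: (n(n−1)/4)·log π + Σ_{i=1}^{n} log Γ((d+1−i)/2) ≥ (n²/4)·log(π e) − nd/2 + Σ_{i=1}^{n} ((d−i)/2)·log((d+1−i)/2) − C·n, where Γ is the real Gamma function and log is the natural logarithm. (The left-hand side equals log Γ_n(d/2), the logarithm of the multivariate gamma function.) -/

import Mathlib

open Real Finset Nat

lemma sqrtPi_le_stirlingSeq (n : ℕ) : Real.sqrt Real.pi ≤ Stirling.stirlingSeq (n + 1) := by
  have h := Stirling.log_stirlingSeq'_antitone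
  have h' := Stirling.stirlingSeq'_antitone
  exact h'.le_of_tendsto
    (Stirling.tendsto_stirlingSeq_sqrt_pi.comp (Filter.tendsto_add_atTop_nat 1)) n

lemma log_factorial_lb (m : ℕ) (hm : 1 ≤ m) :
    (m : ℝ) * Real.log m - m + (1/2) * Real.log (2 * Real.pi * m)
      ≤ Real.log (m ! : ℝ) := by
  obtain ⟨k, rfl⟩ := Nat.exists_eq_add_of_le' hm
  have h := sqrtPi_le_stirlingSeq k
  set m := k + 1 with hmdef
  have hm0 : (0:ℝ) < m := by positivity
  have hden : (0:ℝ) < Real.sqrt (2 * m) * ((m : ℝ) / Real.exp 1) ^ m := by positivity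
  have h2 : Real.sqrt Real.pi * (Real.sqrt (2 * m) * ((m : ℝ) / Real.exp 1) ^ m)
      ≤ (m ! : ℝ) := by
    rw [Stirling.stirlingSeq, le_div_iff₀ hden] at h
    linarith [h]
  have hlog := Real.log_le_log (by positivity) h2
  have hrhs : Real.log (Real.sqrt Real.pi * (Real.sqrt (2 * m) * ((m : ℝ) / Real.exp 1) ^ m))
      = (1/2) * Real.log Real.pi + (1/2) * Real.log (2 * (m:ℝ))
        + (m:ℝ) * Real.log (m:ℝ) - (m:ℝ) := by
    rw [Real.log_mul (by positivity) (by positivity),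
      Real.log_mul (by positivity) (by positivity),
      Real.log_sqrt Real.pi_pos.le, Real.log_sqrt (by positivity),
      Real.log_pow, Real.log_div (ne_of_gt hm0) (Real.exp_ne_zero 1), Real.log_exp]
    push_cast
    ring
  have e1 : Real.log (2 * Real.pi * (m:ℝ)) = Real.log Real.pi + Real.log (2 * (m:ℝ)) := by
    rw [show (2:ℝ) * Real.pi * m = Real.pi * (2 * m) by ring,
      Real.log_mul Real.pi_pos.ne' (by positivity)]
  calc (m : ℝ) * Real.log m - m + (1/2) * Real.log (2 * Real.pi * m)
      = Real.log (Real.sqrt Real.pi * (Real.sqrt (2 * m) * ((m : ℝ) / Real.exp 1) ^ m)) := by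
        rw [hrhs, e1]; ring
    _ ≤ Real.log (m ! : ℝ) := hlog

/-- midpoint log-convexity: `log Γ(y + 1/2) ≤ log Γ(y) + (1/2) log y`. -/
lemma logGamma_mid (y : ℝ) (hy : 0 < y) :
    Real.log (Real.Gamma (y + 1/2)) ≤ Real.log (Real.Gamma y) + (1/2) * Real.log y := by
  have h := Real.convexOn_log_Gamma.2 (Set.mem_Ioi.mpr hy)
    (Set.mem_Ioi.mpr (by linarith : (0:ℝ) < y + 1))
    (by norm_num : (0:ℝ) ≤ (1:ℝ)/2) (by norm_num : (0:ℝ) ≤ (1:ℝ)/2) (by norm_num)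
  simp only [smul_eq_mul, Function.comp_apply] at h
  have hmid : (1:ℝ)/2 * y + 1/2 * (y + 1) = y + 1/2 := by ring
  rw [hmid] at h
  rw [Real.Gamma_add_one hy.ne', Real.log_mul hy.ne'
      (Real.Gamma_pos_of_pos hy).ne'] at h
  linarith

/-- Key per-term bound: for natural `k ≥ 1`,
`log Γ(k/2) ≥ (k/2 - 1/2) log (k/2) - k/2`. -/
lemma key (k : ℕ) (hk : 1 ≤ k) :
    ((k:ℝ)/2 - 1/2) * Real.log ((k:ℝ)/2) - (k:ℝ)/2
      ≤ Real.log (Real.Gamma ((k:ℝ)/2)) := by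
  rcases Nat.even_or_odd k with ⟨m, hm⟩ | ⟨m, hm⟩
  · -- k = 2m, m ≥ 1
    have hm1 : 1 ≤ m := by omega
    have hmR : (0:ℝ) < m := by exact_mod_cast hm1
    have hk2 : (k:ℝ)/2 = m := by
      have : (k:ℝ) = 2 * m := by exact_mod_cast (by omega : k = 2 * m)
      rw [this]; ring
    rw [hk2]
    have hG : Real.Gamma (m:ℝ) = ((m-1)! : ℝ) := by
      obtain ⟨j, rfl⟩ := Nat.exists_eq_add_of_le hm1
      rw [add_comm 1 j]
      simpa using Real.Gamma_nat_eq_factorial j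
    rw [hG]
    have hfac : Real.log (((m-1)! : ℕ) : ℝ) = Real.log (m ! : ℝ) - Real.log m := by
      have : (m ! : ℝ) = m * ((m-1)! : ℕ) := by
        obtain ⟨j, rfl⟩ := Nat.exists_eq_add_of_le hm1
        rw [add_comm 1 j]
        push_cast [Nat.factorial_succ]
        ring
      rw [this, Real.log_mul hmR.ne' (by positivity)]
      ring
    rw [hfac]
    have h1 := log_factorial_lb m hm1
    have h2 : Real.log ((m:ℝ)) ≤ Real.log (2 * Real.pi * m) := by
      apply Real.log_le_log hmR
      nlinarith [Real.pi_gt_three]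
    nlinarith [h1, h2]
  · -- k = 2m+1
    rcases Nat.eq_or_lt_of_le hk with h1 | h1
    · -- k = 1
      rw [← h1]
      norm_num
      rw [Real.Gamma_one_half_eq, Real.log_sqrt Real.pi_pos.le]
      have : 0 < Real.log Real.pi := Real.log_pos (by linarith [Real.pi_gt_three])
      linarith
    · have hm1 : 1 ≤ m := by omega
      have hmR : (1:ℝ) ≤ m := by exact_mod_cast hm1
      have hk2 : (k:ℝ)/2 = (m:ℝ) + 1/2 := by
        have : (k:ℝ) = 2 * m + 1 := by exact_mod_cast hm
        rw [this]; ring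
      rw [hk2]
      have hmid := logGamma_mid ((m:ℝ) + 1/2) (by linarith)
      have hG : Real.Gamma ((m:ℝ) + 1/2 + 1/2) = (m ! : ℝ) := by
        rw [show (m:ℝ) + 1/2 + 1/2 = (m:ℝ) + 1 by ring]
        exact Real.Gamma_nat_eq_factorial m
      rw [hG] at hmid
      -- log Γ(m+1/2) ≥ log m! − (1/2) log(m+1/2)
      have h1 := log_factorial_lb m hm1
      -- need: m log(m+1/2) − (m+1/2) ≤ log m! − (1/2)log(m+1/2)
      have ha : (m:ℝ) * Real.log ((m:ℝ) + 1/2) - (m:ℝ) * Real.log m ≤ 1/2 := by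
        have hq : Real.log ((m:ℝ) + 1/2) - Real.log m
            = Real.log (((m:ℝ) + 1/2)/m) := by
          rw [Real.log_div (by linarith) (by linarith)]
        have := Real.log_le_sub_one_of_pos
          (show (0:ℝ) < ((m:ℝ) + 1/2)/m by positivity)
        have hms : ((m:ℝ) + 1/2)/m - 1 = 1/(2*m) := by
          field_simp; ring
        rw [hms] at this
        have h3 : (m:ℝ) * Real.log (((m:ℝ) + 1/2)/m) ≤ (m:ℝ) * (1/(2*m)) :=
          mul_le_mul_of_nonneg_left this (by linarith)
        rw [show (m:ℝ) * (1/(2*m)) = 1/2 by field_simp] at h3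
        nlinarith [hq]
      have hb : Real.log ((m:ℝ) + 1/2) ≤ Real.log (2 * Real.pi * m) := by
        apply Real.log_le_log (by linarith)
        nlinarith [Real.pi_gt_three]
      nlinarith [hmid, h1]

lemma sum_Icc_cast (n : ℕ) : ∑ i ∈ Finset.Icc 1 n, (i:ℝ) = n * (n+1) / 2 := by
  induction n with
  | zero => simp
  | succ n ih =>
    rw [Finset.sum_Icc_succ_top (by omega : 1 ≤ n + 1), ih]
    push_cast
    ring

/-- **Lower bound on the logarithm of the multivariate gamma function.**
There is an absolute constant `C > 0` such that for all positive integers `n ≤ d`,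
`(n(n−1)/4) log π + Σ_{i=1}^n log Γ((d+1−i)/2)`, which equals `log Γ_n(d/2)`,
is at least `(n²/4) log(π e) − nd/2 + Σ_{i=1}^n ((d−i)/2) log((d+1−i)/2) − C n`. -/
theorem log_multivariate_gamma_lower_bound :
    ∃ C : ℝ, 0 < C ∧
      ∀ n d : ℕ, 1 ≤ n → n ≤ d →
        (n : ℝ) * ((n : ℝ) - 1) / 4 * Real.log Real.pi
            + ∑ i ∈ Finset.Icc 1 n, Real.log (Real.Gamma (((d : ℝ) + 1 - (i : ℝ)) / 2))
          ≥ (n : ℝ) ^ 2 / 4 * Real.log (Real.pi * Real.exp 1) - (n : ℝ) * d / 2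
            + (∑ i ∈ Finset.Icc 1 n, ((d : ℝ) - (i : ℝ)) / 2
                * Real.log (((d : ℝ) + 1 - (i : ℝ)) / 2))
            - C * n := by
  refine ⟨1, one_pos, fun n d hn hnd => ?_⟩
  have hsum : ∑ i ∈ Finset.Icc 1 n, (((d:ℝ) - i) / 2 * Real.log (((d:ℝ) + 1 - i) / 2)
        - ((d:ℝ) + 1 - i) / 2)
      ≤ ∑ i ∈ Finset.Icc 1 n, Real.log (Real.Gamma (((d : ℝ) + 1 - (i : ℝ)) / 2)) := by
    apply Finset.sum_le_sum
    intro i hi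
    rw [Finset.mem_Icc] at hi
    have hk : 1 ≤ d + 1 - i := by omega
    have hkcast : ((d + 1 - i : ℕ) : ℝ) = (d:ℝ) + 1 - i := by
      push_cast [Nat.cast_sub (by omega : i ≤ d + 1)]
      ring
    have := key (d + 1 - i) hk
    rw [hkcast] at this
    calc ((d:ℝ) - i) / 2 * Real.log (((d:ℝ) + 1 - i) / 2) - ((d:ℝ) + 1 - i) / 2
        = (((d:ℝ) + 1 - i)/2 - 1/2) * Real.log (((d:ℝ) + 1 - i) / 2)
          - ((d:ℝ) + 1 - i)/2 := by ring
      _ ≤ _ := this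
  -- now arithmetic
  rw [Real.log_mul Real.pi_pos.ne' (Real.exp_ne_zero 1), Real.log_exp]
  have hgauss : ∑ i ∈ Finset.Icc 1 n, (((d:ℝ) + 1 - i) / 2)
      = n * ((d:ℝ)+1) / 2 - n * (n+1) / 4 := by
    have hterm : ∀ i ∈ Finset.Icc 1 n, ((d:ℝ) + 1 - i) / 2
        = ((d:ℝ)+1)/2 - (1/2) * (i:ℝ) := by intro i _; ring
    rw [Finset.sum_congr rfl hterm, Finset.sum_sub_distrib, Finset.sum_const,
      Nat.card_Icc, ← Finset.mul_sum, sum_Icc_cast]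
    simp only [nsmul_eq_mul]
    push_cast
    ring
  rw [Finset.sum_sub_distrib] at hsum
  rw [hgauss] at hsum
  have hlogpi : Real.log Real.pi ≤ 3 := by
    nlinarith [Real.log_le_sub_one_of_pos Real.pi_pos, Real.pi_lt_d2]
  have hn1 : (1:ℝ) ≤ n := by exact_mod_cast hn
  nlinarith [hsum, hn1, hlogpi, sq_nonneg ((n:ℝ))]
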